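/- Suppose U = {u} is a singleton and b_{p,q}(u) = d_p for all p,q ∈ [r], where d₁,…,d_r ≥ 0 and Σ_p d_p = 1. Let c = Σ_{p,q ∈ [r]} ζ_{p,q}(u) and let Φ = Σ_{q=1}^r d_q·Ψ_q. Then c is a standard circular element with respect to Φ: for every m ≥ 1 and ε₁,…,ε_m ∈ {1,*}, Φ(c^{ε₁}⋯c^{ε_m}) = φ₀(c₀^{ε₁}⋯c₀^{ε_m}), where c₀ is a standard circular operator on the full Fock space over a two-element set with vacuum state φ₀. -/

import Mathlib

noncomputable section

/-- A letter of a word in the matricially free Fock space of tracial type. -/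
abbrev MLetter (r : ℕ) (L : Type*) := (Fin r × Fin r) × L

/-- A finite nonempty chained word with letters in `J × L`. -/
structure MWord (r : ℕ) (J : Set (Fin r × Fin r)) (L : Type*) where
  head : MLetter r L
  tail : List (MLetter r L)
  headJ : head.1 ∈ J
  tailJ : ∀ x ∈ tail, x.1 ∈ J
  chain : List.Chain' (fun a b : MLetter r L => a.1.2 = b.1.1) (head :: tail)

/-- Canonical orthonormal basis index set: vacua `Ω₁,…,Ω_r` and the words. -/
abbrev MBasis (r : ℕ) (J : Set (Fin r × Fin r)) (L : Type*) := (Fin r) ⊕ (MWord r J L)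

/-- The matricially free Fock space of tracial type, `ℓ²` of the basis set. -/
abbrev MSpace (r : ℕ) (J : Set (Fin r × Fin r)) (L : Type*) :=
  lp (fun _ : MBasis r J L => ℂ) 2

/-- Canonical basis vector. -/
def mvec {r : ℕ} {J : Set (Fin r × Fin r)} {L : Type*} (i : MBasis r J L) : MSpace r J L := by
  classical exact lp.single 2 i 1

/-- The vacuum vector `Ω_q`. -/
def vac {r : ℕ} {J : Set (Fin r × Fin r)} {L : Type*} (q : Fin r) : MSpace r J L :=
  mvec (Sum.inl q)

/-- Basis vector of a word. -/
def wvec {r : ℕ} {J : Set (Fin r × Fin r)} {L : Type*} (w : MWord r J L) : MSpace r J L :=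
  mvec (Sum.inr w)

/-- The single-letter word. -/
def MWord.single {r : ℕ} {J : Set (Fin r × Fin r)} {L : Type*}
    (x : MLetter r L) (hx : x.1 ∈ J) : MWord r J L :=
  ⟨x, [], hx, (by intro y hy; cases hy), List.isChain_singleton _⟩

/-- Prepending a letter to a word. -/
def MWord.cons {r : ℕ} {J : Set (Fin r × Fin r)} {L : Type*}
    (x : MLetter r L) (hx : x.1 ∈ J) (w : MWord r J L)
    (hc : x.1.2 = w.head.1.1) : MWord r J L :=
  ⟨x, w.head :: w.tail, hx, by
      intro y hy
      rcases List.mem_cons.mp hy with h | h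
      · exact h ▸ w.headJ
      · exact w.tailJ y h,
    List.isChain_cons_cons.mpr ⟨hc, w.chain⟩⟩

/-- `T` is the matricially free creation operator `℘_{p,q}(l)` with covariance `b`:
it maps `Ω_q` to `√b·((p,q,l))`, each word starting with first index `q` to `√b` times the
word with `((p,q),l)` prepended, and all other canonical basis vectors to `0`. -/
def IsMFCreation {r : ℕ} {J : Set (Fin r × Fin r)} {L : Type*}
    (b : ℝ) (p q : Fin r) (l : L) (hpq : ((p, q) : Fin r × Fin r) ∈ J)
    (T : MSpace r J L →L[ℂ] MSpace r J L) : Prop :=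
  T (vac q) = (Real.sqrt b : ℂ) • wvec (MWord.single ((p, q), l) hpq) ∧
  (∀ q' : Fin r, q' ≠ q → T (vac q') = 0) ∧
  (∀ (w : MWord r J L) (h : w.head.1.1 = q),
      T (wvec w) = (Real.sqrt b : ℂ) • wvec (MWord.cons ((p, q), l) hpq w h.symm)) ∧
  (∀ w : MWord r J L, w.head.1.1 ≠ q → T (wvec w) = 0)

/-- The vector state `Ψ_q(a) = ⟨aΩ_q, Ω_q⟩`. -/
def PsiM {r : ℕ} {J : Set (Fin r × Fin r)} {L : Type*} (q : Fin r)
    (a : MSpace r J L →L[ℂ] MSpace r J L) : ℂ :=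
  @inner ℂ _ _ (vac q : MSpace r J L) (a (vac q))

end
noncomputable section

/-- Basis index set of the full Fock space over `I`: the vacuum and the nonempty words. -/
abbrev FBasis (I : Type*) := Unit ⊕ {w : List I // w ≠ []}

/-- The full Fock space over `I`, `ℓ²` of its canonical basis set. -/
abbrev FSpace (I : Type*) := lp (fun _ : FBasis I => ℂ) 2

/-- Canonical basis vector of the full Fock space. -/
def fvec {I : Type*} (i : FBasis I) : FSpace I := by
  classical exact lp.single 2 i 1

/-- The vacuum vector `δ_Ω`. -/
def fvac {I : Type*} : FSpace I := fvec (Sum.inl ())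

/-- The basis vector `δ_w` of a nonempty word `w`. -/
def fword {I : Type*} (w : List I) (hw : w ≠ []) : FSpace I := fvec (Sum.inr ⟨w, hw⟩)

/-- `T` is the free creation operator `ℓ(i)`: it sends `δ_Ω` to `δ_{(i)}` and each
word basis vector `δ_w` to `δ_{i·w}`. -/
def IsFreeCreation {I : Type*} (i : I) (T : FSpace I →L[ℂ] FSpace I) : Prop :=
  T fvac = fword [i] (by simp) ∧
  ∀ (w : List I) (hw : w ≠ []), T (fword w hw) = fword (i :: w) (by simp)

/-- The vacuum state `φ(a) = ⟨aδ_Ω, δ_Ω⟩` on the full Fock space. -/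
def fockState {I : Type*} (a : FSpace I →L[ℂ] FSpace I) : ℂ :=
  @inner ℂ _ _ (fvac : FSpace I) (a fvac)

/-- The Hilbert direct sum `F^{⊕r}` of `r` copies of the full Fock space. -/
abbrev FockR (r : ℕ) (I : Type*) := PiLp 2 (fun _ : Fin r => FSpace I)

instance pilp_completeSpace {ι : Type*} [Fintype ι] {E : ι → Type*}
    [∀ i, NormedAddCommGroup (E i)] [∀ i, CompleteSpace (E i)] :
    CompleteSpace (PiLp 2 E) :=
  inferInstance

/-- Tuple constructor for `F^{⊕r}`. -/
def tupOf {r : ℕ} {I : Type*} (f : Fin r → FSpace I) : FockR r I :=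
  (WithLp.equiv 2 (∀ _ : Fin r, FSpace I)).symm f

/-- Component of an element of `F^{⊕r}`. -/
def tupComp {r : ℕ} {I : Type*} (ξ : FockR r I) (k : Fin r) : FSpace I :=
  (WithLp.equiv 2 (∀ _ : Fin r, FSpace I)) ξ k

/-- `δ^{(q)}`, the tuple with `δ_Ω` in position `q` and `0` elsewhere. -/
def fockDelta {r : ℕ} {I : Type*} (q : Fin r) : FockR r I :=
  tupOf (fun k => if k = q then fvac else 0)

/-- The state `Φ_k(x) = ⟨x δ^{(k)}, δ^{(k)}⟩` on the bounded operators on `F^{⊕r}`. -/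
def PhiR {r : ℕ} {I : Type*} (k : Fin r) (x : FockR r I →L[ℂ] FockR r I) : ℂ :=
  @inner ℂ _ _ (fockDelta k : FockR r I) (x (fockDelta k))

end
/-- `x^ε` for `ε ∈ {1, *}`: `x^1 = x` (encoded `true`) and `x^* = adjoint x` (encoded `false`). -/
noncomputable def sOp {H : Type*} [NormedAddCommGroup H] [InnerProductSpace ℂ H]
    [CompleteSpace H] (ε : Bool) (x : H →L[ℂ] H) : H →L[ℂ] H :=
  if ε then x else ContinuousLinearMap.adjoint x

set_option maxHeartbeats 1000000

noncomputable section AuxCircProof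
namespace AuxCirc

open ContinuousLinearMap (adjoint)
open scoped Classical

/-! ### Generic `lp` lemmas -/

section LP
variable {ι : Type*}

lemma inner_single_single [DecidableEq ι] (i j : ι) :
    @inner ℂ _ _ (lp.single 2 i (1:ℂ) : lp (fun _ : ι => ℂ) 2) (lp.single 2 j 1)
      = if i = j then 1 else 0 := by
  rw [lp.inner_single_left]
  by_cases h : i = j
  · subst h; simp [lp.single_apply_self, RCLike.inner_apply]
  · simp [RCLike.inner_apply, h]

lemma ext_of_inner_single [DecidableEq ι] {x y : lp (fun _ : ι => ℂ) 2}
    (h : ∀ i, @inner ℂ _ _ (lp.single 2 i (1:ℂ) : lp (fun _ : ι => ℂ) 2) x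
        = @inner ℂ _ _ (lp.single 2 i (1:ℂ) : lp (fun _ : ι => ℂ) 2) y) : x = y := by
  apply lp.ext
  funext i
  have := h i
  rwa [lp.inner_single_left, lp.inner_single_left, RCLike.inner_apply, RCLike.inner_apply,
    map_one, mul_one, mul_one] at this

lemma adjoint_apply_eq [DecidableEq ι] (T : lp (fun _ : ι => ℂ) 2 →L[ℂ] lp (fun _ : ι => ℂ) 2)
    (x y : lp (fun _ : ι => ℂ) 2)
    (h : ∀ i, @inner ℂ _ _ (T (lp.single 2 i 1)) x
        = @inner ℂ _ _ (lp.single 2 i (1:ℂ) : lp (fun _ : ι => ℂ) 2) y) :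
    ContinuousLinearMap.adjoint T x = y := by
  refine ext_of_inner_single (fun i => ?_)
  rw [ContinuousLinearMap.adjoint_inner_right]
  exact h i

lemma sum_succ_fun {r n : ℕ} {M : Type*} [AddCommMonoid M] (F : (Fin (n+1) → Fin r) → M) :
    ∑ f : Fin (n+1) → Fin r, F f = ∑ p : Fin r, ∑ g : Fin n → Fin r, F (Fin.cons p g) := by
  rw [← Equiv.sum_comp (Fin.consEquiv (fun _ => Fin r)) F, Fintype.sum_prod_type]
  rfl

end LP

/-! ### Bridging lemmas for `mvec` and `fvec` -/

section Bridge
variable {r : ℕ} {J : Set (Fin r × Fin r)} {L : Type*}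

@[simp] lemma vac_mvec (q : Fin r) : (vac q : MSpace r J L) = mvec (Sum.inl q) := rfl

@[simp] lemma wvec_mvec (w : MWord r J L) : (wvec w : MSpace r J L) = mvec (Sum.inr w) := rfl

lemma mvec_eq [DecidableEq (MBasis r J L)] (i : MBasis r J L) :
    (mvec i : MSpace r J L) = lp.single 2 i 1 := by
  unfold mvec
  congr!

lemma inner_mvec (i j : MBasis r J L) :
    @inner ℂ _ _ (mvec i : MSpace r J L) (mvec j) = if i = j then 1 else 0 := by
  classical rw [mvec_eq, mvec_eq, inner_single_single]

lemma mext {x y : MSpace r J L}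
    (h : ∀ i, @inner ℂ _ _ (mvec i : MSpace r J L) x = @inner ℂ _ _ (mvec i : MSpace r J L) y) :
    x = y := by
  classical
  exact ext_of_inner_single (fun i => by
    have := h i; rwa [mvec_eq] at this)

lemma madj (T : MSpace r J L →L[ℂ] MSpace r J L) (x y : MSpace r J L)
    (h : ∀ i, @inner ℂ _ _ (T (mvec i)) x = @inner ℂ _ _ (mvec i : MSpace r J L) y) :
    adjoint T x = y := by
  classical
  exact adjoint_apply_eq T x y (fun i => by have := h i; rwa [mvec_eq] at this)

variable {I : Type*}

@[simp] lemma fvac_fvec : (fvac : FSpace I) = fvec (Sum.inl ()) := rfl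

@[simp] lemma fword_fvec (w : List I) (hw : w ≠ []) :
    (fword w hw : FSpace I) = fvec (Sum.inr ⟨w, hw⟩) := rfl

lemma fvec_eq [DecidableEq (FBasis I)] (i : FBasis I) :
    (fvec i : FSpace I) = lp.single 2 i 1 := by
  unfold fvec
  congr!

lemma inner_fvec (i j : FBasis I) :
    @inner ℂ _ _ (fvec i : FSpace I) (fvec j) = if i = j then 1 else 0 := by
  classical rw [fvec_eq, fvec_eq, inner_single_single]

lemma fext {x y : FSpace I}
    (h : ∀ i, @inner ℂ _ _ (fvec i : FSpace I) x = @inner ℂ _ _ (fvec i : FSpace I) y) :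
    x = y := by
  classical
  exact ext_of_inner_single (fun i => by have := h i; rwa [fvec_eq] at this)

lemma fadj (T : FSpace I →L[ℂ] FSpace I) (x y : FSpace I)
    (h : ∀ i, @inner ℂ _ _ (T (fvec i)) x = @inner ℂ _ _ (fvec i : FSpace I) y) :
    adjoint T x = y := by
  classical
  exact adjoint_apply_eq T x y (fun i => by have := h i; rwa [fvec_eq] at this)

end Bridge

/-! ### Word combinatorics -/

section Words
variable {r : ℕ}

abbrev LL := Unit ⊕ Unit

def lab : Fin 2 → LL := fun i => if i = 0 then Sum.inl () else Sum.inr ()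

lemma lab_zero : lab 0 = Sum.inl () := rfl
lemma lab_one : lab 1 = Sum.inr () := rfl

@[simp] lemma lab_inj {i j : Fin 2} : lab i = lab j ↔ i = j := by
  fin_cases i <;> fin_cases j <;> simp [lab]

def hdp (q : Fin r) : List (Fin 2 × Fin r) → Fin r
  | [] => q
  | (_, p) :: _ => p

def letsW (q : Fin r) : List (Fin 2 × Fin r) → List (MLetter r LL)
  | [] => []
  | (i, p) :: t => ((p, hdp q t), lab i) :: letsW q t

lemma letsW_chain (q : Fin r) : ∀ (t : List (Fin 2 × Fin r)) (x : MLetter r LL),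
    x.1.2 = hdp q t →
    List.Chain' (fun a b : MLetter r LL => a.1.2 = b.1.1) (x :: letsW q t)
  | [], x, _ => List.isChain_singleton _
  | (i, p) :: t, x, hx => List.isChain_cons_cons.mpr ⟨hx, letsW_chain q t _ rfl⟩

def mwd (q : Fin r) (i : Fin 2) (p : Fin r) (t : List (Fin 2 × Fin r)) :
    MWord r Set.univ LL :=
  ⟨((p, hdp q t), lab i), letsW q t, Set.mem_univ _, fun _ _ => Set.mem_univ _,
    letsW_chain q t _ rfl⟩

lemma mword_eq_iff {J : Set (Fin r × Fin r)} {L : Type*} {w w' : MWord r J L} :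
    w = w' ↔ w.head = w'.head ∧ w.tail = w'.tail := by
  constructor
  · rintro rfl; exact ⟨rfl, rfl⟩
  · rintro ⟨h1, h2⟩; cases w; cases w'
    simp only at h1 h2
    subst h1; subst h2; rfl

lemma mwd_head (q : Fin r) (i : Fin 2) (p : Fin r) (t : List (Fin 2 × Fin r)) :
    (mwd q i p t).head = ((p, hdp q t), lab i) := rfl

lemma mwd_tail (q : Fin r) (i : Fin 2) (p : Fin r) (t : List (Fin 2 × Fin r)) :
    (mwd q i p t).tail = letsW q t := rfl

lemma mwd_head_idx (q : Fin r) (i : Fin 2) (p : Fin r) (t : List (Fin 2 × Fin r)) :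
    (mwd q i p t).head.1.1 = p := rfl

lemma single_eq_mwd (q : Fin r) (i : Fin 2) (p : Fin r) :
    MWord.single ((p, q), lab i) (Set.mem_univ _) = mwd q i p ([] : List (Fin 2 × Fin r)) := rfl

lemma cons_eq_mwd (q : Fin r) (i : Fin 2) (p : Fin r) (i' : Fin 2) (p' : Fin r)
    (t : List (Fin 2 × Fin r)) (h : (((p, p'), lab i) : MLetter r LL).1.2 = (mwd q i' p' t).head.1.1) :
    MWord.cons ((p, p'), lab i) (Set.mem_univ _) (mwd q i' p' t) h = mwd q i p ((i', p') :: t) := rfl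

lemma single_eq_mwd_iff {x : MLetter r LL} {hx : x.1 ∈ (Set.univ : Set (Fin r × Fin r))}
    {q : Fin r} {i₀ : Fin 2} {p₀ : Fin r} {t : List (Fin 2 × Fin r)} :
    (MWord.single x hx = mwd q i₀ p₀ t) ↔ (x = ((p₀, q), lab i₀) ∧ t = []) := by
  rw [mword_eq_iff]
  cases t with
  | nil => simp [MWord.single, mwd, letsW, hdp]
  | cons y t' =>
      obtain ⟨i₁, p₁⟩ := y
      simp [MWord.single, mwd, letsW]

lemma cons_eq_mwd_iff {x : MLetter r LL} {hx : x.1 ∈ (Set.univ : Set (Fin r × Fin r))}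
    {w : MWord r Set.univ LL} {hc : x.1.2 = w.head.1.1}
    {q : Fin r} {i₀ : Fin 2} {p₀ : Fin r} {t : List (Fin 2 × Fin r)} :
    (MWord.cons x hx w hc = mwd q i₀ p₀ t) ↔
      (∃ i₁ p₁ t', t = (i₁, p₁) :: t' ∧ x = ((p₀, p₁), lab i₀) ∧ w = mwd q i₁ p₁ t') := by
  cases t with
  | nil =>
      simp only [mword_eq_iff, MWord.cons, mwd, letsW]
      simp
  | cons y t' =>
      obtain ⟨i₁, p₁⟩ := y
      rw [mword_eq_iff]
      constructor
      · rintro ⟨h1, h2⟩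
        simp only [MWord.cons, mwd, hdp, letsW, List.cons.injEq] at h1 h2
        exact ⟨i₁, p₁, t', rfl, h1, mword_eq_iff.mpr ⟨h2.1, h2.2⟩⟩
      · rintro ⟨i₂, p₂, t₂, ht, rfl, rfl⟩
        injection ht with h1 h2
        injection h1 with ha hb
        subst ha; subst hb; subst h2
        exact ⟨rfl, rfl⟩

end Words


/-! ### Operator actions on the matricial side -/

section Ops
variable {r : ℕ}
variable (d : Fin r → ℝ)
variable (C : (p q : Fin r) → LL → (MSpace r Set.univ LL →L[ℂ] MSpace r Set.univ LL))

def CrOp (l : LL) : MSpace r Set.univ LL →L[ℂ] MSpace r Set.univ LL :=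
  ∑ pq : Fin r × Fin r, C pq.1 pq.2 l

def AnOp (l : LL) : MSpace r Set.univ LL →L[ℂ] MSpace r Set.univ LL :=
  ∑ pq : Fin r × Fin r, adjoint (C pq.1 pq.2 l)


lemma CrOp_vac (hC : ∀ p q l, IsMFCreation (d p) p q l (Set.mem_univ _) (C p q l)) (i : Fin 2) (q : Fin r) :
    CrOp C (lab i) (vac q)
      = ∑ a : Fin r, (Real.sqrt (d a) : ℂ) • wvec (mwd q i a []) := by
  rw [CrOp, ContinuousLinearMap.sum_apply, Fintype.sum_prod_type]
  refine Finset.sum_congr rfl fun a _ => ?_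
  rw [Finset.sum_eq_single q]
  · rw [(hC a q (lab i)).1, single_eq_mwd]
  · intro b _ hb
    exact (hC a b (lab i)).2.1 q (Ne.symm hb)
  · intro h; exact absurd (Finset.mem_univ q) h

lemma CrOp_mwd (hC : ∀ p q l, IsMFCreation (d p) p q l (Set.mem_univ _) (C p q l)) (i : Fin 2) (q : Fin r) (i₀ : Fin 2) (p₀ : Fin r) (t : List (Fin 2 × Fin r)) :
    CrOp C (lab i) (wvec (mwd q i₀ p₀ t))
      = ∑ a : Fin r, (Real.sqrt (d a) : ℂ) • wvec (mwd q i a ((i₀, p₀) :: t)) := by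
  rw [CrOp, ContinuousLinearMap.sum_apply, Fintype.sum_prod_type]
  refine Finset.sum_congr rfl fun a _ => ?_
  rw [Finset.sum_eq_single p₀]
  · rw [(hC a p₀ (lab i)).2.2.1 (mwd q i₀ p₀ t) rfl]
    rw [cons_eq_mwd]
  · intro b _ hb
    exact (hC a b (lab i)).2.2.2 (mwd q i₀ p₀ t) hb.symm
  · intro h; exact absurd (Finset.mem_univ p₀) h

lemma AnOp_vac (hC : ∀ p q l, IsMFCreation (d p) p q l (Set.mem_univ _) (C p q l)) (l : LL) (q : Fin r) :
    AnOp C l (vac q) = 0 := by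
  rw [AnOp, ContinuousLinearMap.sum_apply]
  refine Finset.sum_eq_zero fun pq _ => ?_
  obtain ⟨a, b⟩ := pq
  refine madj _ _ _ fun j => ?_
  rw [inner_zero_right]
  cases j with
  | inl q' =>
      by_cases h : q' = b
      · rw [show (mvec (Sum.inl q') : MSpace r Set.univ LL) = vac q' from rfl, h,
          (hC a b l).1, inner_smul_left]
        rw [show (wvec (MWord.single ((a, b), l) (Set.mem_univ _)) : MSpace r Set.univ LL)
            = mvec (Sum.inr (MWord.single ((a, b), l) (Set.mem_univ _))) from rfl,
          show (vac q : MSpace r Set.univ LL) = mvec (Sum.inl q) from rfl, inner_mvec]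
        simp
      · rw [show (mvec (Sum.inl q') : MSpace r Set.univ LL) = vac q' from rfl,
          (hC a b l).2.1 q' h, inner_zero_left]
  | inr w =>
      by_cases h : w.head.1.1 = b
      · rw [show (mvec (Sum.inr w) : MSpace r Set.univ LL) = wvec w from rfl,
          (hC a b l).2.2.1 w h, inner_smul_left]
        rw [show (wvec (MWord.cons ((a, b), l) (Set.mem_univ _) w h.symm) : MSpace r Set.univ LL)
            = mvec (Sum.inr (MWord.cons ((a, b), l) (Set.mem_univ _) w h.symm)) from rfl,
          show (vac q : MSpace r Set.univ LL) = mvec (Sum.inl q) from rfl, inner_mvec]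
        simp
      · rw [show (mvec (Sum.inr w) : MSpace r Set.univ LL) = wvec w from rfl,
          (hC a b l).2.2.2 w h, inner_zero_left]

def prevV (q : Fin r) : List (Fin 2 × Fin r) → MSpace r Set.univ LL
  | [] => vac q
  | (i, p) :: t => wvec (mwd q i p t)

lemma inner_ite_smul {H : Type*} [NormedAddCommGroup H] [InnerProductSpace ℂ H]
    (P : Prop) [Decidable P] (c : ℂ) (x y : H) :
    (inner ℂ x (if P then c • y else (0 : H)) : ℂ) = if P then c * inner ℂ x y else 0 := by
  split_ifs <;> simp [inner_smul_right]

lemma adjC_mwd (hC : ∀ p q l, IsMFCreation (d p) p q l (Set.mem_univ _) (C p q l))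
    (i'' : Fin 2) (a b : Fin r) (q : Fin r) (i₀ : Fin 2) (p₀ : Fin r)
    (t : List (Fin 2 × Fin r)) :
    adjoint (C a b (lab i'')) (wvec (mwd q i₀ p₀ t))
      = if i'' = i₀ ∧ a = p₀ ∧ b = hdp q t then (Real.sqrt (d p₀) : ℂ) • prevV q t else 0 := by
  refine madj _ _ _ fun j => ?_
  cases j with
  | inl q' =>
      by_cases h : q' = b
      · rw [show (mvec (Sum.inl q') : MSpace r Set.univ LL) = vac q' from rfl, h,
          (hC a b (lab i'')).1, inner_smul_left]
        cases t with
        | nil =>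
            rw [inner_ite_smul]
            simp only [single_eq_mwd, wvec_mvec, vac_mvec, prevV, hdp, inner_mvec,
              inner_ite_smul, Sum.inr.injEq, Sum.inl.injEq, Complex.conj_ofReal]
            by_cases h1 : a = p₀ <;> by_cases h2 : b = q <;> by_cases h3 : i'' = i₀ <;>
              simp_all [mword_eq_iff, mwd, MWord.single, hdp, letsW, Prod.ext_iff]
        | cons y t' =>
            obtain ⟨i₁, p₁⟩ := y
            rw [inner_ite_smul]
            simp only [wvec_mvec, vac_mvec, prevV, hdp, inner_mvec, inner_ite_smul,
              Sum.inr.injEq, Complex.conj_ofReal, single_eq_mwd_iff]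
            simp
      · rw [show (mvec (Sum.inl q') : MSpace r Set.univ LL) = vac q' from rfl,
          (hC a b (lab i'')).2.1 q' h, inner_zero_left]
        cases t with
        | nil =>
            rw [inner_ite_smul]
            simp only [prevV, hdp, vac_mvec, inner_ite_smul, inner_mvec, Sum.inl.injEq]
            split_ifs with hcond hq
            · exact absurd (hq ▸ hcond.2.2) (Ne.symm h)
            · simp
            · rfl
        | cons y t' =>
            obtain ⟨i₁, p₁⟩ := y
            rw [inner_ite_smul]
            simp only [prevV, hdp, vac_mvec, wvec_mvec, inner_ite_smul, inner_mvec]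
            simp
  | inr w =>
      by_cases h : w.head.1.1 = b
      · rw [show (mvec (Sum.inr w) : MSpace r Set.univ LL) = wvec w from rfl,
          (hC a b (lab i'')).2.2.1 w h, inner_smul_left]
        cases t with
        | nil =>
            rw [inner_ite_smul]
            simp only [wvec_mvec, vac_mvec, prevV, hdp, inner_mvec, inner_ite_smul,
              Sum.inr.injEq, Sum.inl.injEq, Complex.conj_ofReal, cons_eq_mwd_iff]
            simp
        | cons y t' =>
            obtain ⟨i₁, p₁⟩ := y
            rw [inner_ite_smul]
            simp only [wvec_mvec, vac_mvec, prevV, hdp, inner_mvec, inner_ite_smul,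
              Sum.inr.injEq, Complex.conj_ofReal, cons_eq_mwd_iff, List.cons.injEq,
              Prod.mk.injEq, lab_inj]
            by_cases h1 : a = p₀ <;> by_cases h2 : b = p₁ <;> by_cases h3 : i'' = i₀ <;>
              by_cases hw : w = mwd q i₁ p₁ t' <;> simp_all [mwd_head_idx]
      · rw [show (mvec (Sum.inr w) : MSpace r Set.univ LL) = wvec w from rfl,
          (hC a b (lab i'')).2.2.2 w h, inner_zero_left]
        cases t with
        | nil =>
            rw [inner_ite_smul]
            simp only [prevV, hdp, vac_mvec, inner_ite_smul, inner_mvec]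
            simp [inner_mvec]
        | cons y t' =>
            obtain ⟨i₁, p₁⟩ := y
            rw [inner_ite_smul]
            simp only [prevV, hdp, vac_mvec, wvec_mvec, inner_ite_smul, inner_mvec,
              Sum.inr.injEq]
            split_ifs with hcond hw
            · exact absurd (by rw [hw, mwd_head_idx]; exact hcond.2.2.symm) h
            · simp
            · rfl

lemma AnOp_mwd (hC : ∀ p q l, IsMFCreation (d p) p q l (Set.mem_univ _) (C p q l))
    (i : Fin 2) (q : Fin r) (i₀ : Fin 2) (p₀ : Fin r) (t : List (Fin 2 × Fin r)) :
    AnOp C (lab i) (wvec (mwd q i₀ p₀ t))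
      = if i = i₀ then (Real.sqrt (d p₀) : ℂ) • prevV q t else 0 := by
  rw [AnOp, ContinuousLinearMap.sum_apply]
  have key : ∀ pq : Fin r × Fin r, adjoint (C pq.1 pq.2 (lab i)) (wvec (mwd q i₀ p₀ t))
      = if i = i₀ ∧ pq.1 = p₀ ∧ pq.2 = hdp q t then (Real.sqrt (d p₀) : ℂ) • prevV q t else 0 :=
    fun pq => adjC_mwd d C hC i pq.1 pq.2 q i₀ p₀ t
  simp only [key]
  have hs : (∑ pq : Fin r × Fin r, if i = i₀ ∧ pq.1 = p₀ ∧ pq.2 = hdp q t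
        then (Real.sqrt (d p₀) : ℂ) • prevV q t else 0)
      = if i = i₀ ∧ (p₀, hdp q t).1 = p₀ ∧ (p₀, hdp q t).2 = hdp q t
        then (Real.sqrt (d p₀) : ℂ) • prevV q t else 0 := by
    apply Finset.sum_eq_single_of_mem _ (Finset.mem_univ _)
    rintro pq _ hpq
    rw [if_neg]
    rintro ⟨-, h2, h3⟩
    exact hpq (Prod.ext h2 h3)
  rw [hs]
  simp

def VvM (d : Fin r → ℝ) (q : Fin r) : List (Fin 2) → MSpace r Set.univ LL
  | [] => vac q
  | i :: t => ∑ g : Fin (t.length + 1) → Fin r,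
      (∏ j, (Real.sqrt (d (g j)) : ℂ)) •
        wvec (mwd q i (g 0) (t.zip (List.ofFn (fun k => g k.succ))))

lemma sum_fun_one {M : Type*} [AddCommMonoid M] (F : (Fin 1 → Fin r) → M) :
    ∑ g : Fin 1 → Fin r, F g = ∑ p : Fin r, F (fun _ => p) := by
  rw [sum_succ_fun]
  refine Finset.sum_congr rfl fun p _ => ?_
  rw [Fintype.sum_subsingleton _ (fun j : Fin 0 => j.elim0)]
  congr 1
  funext j
  rw [Fin.eq_zero j, Fin.cons_zero]

lemma CrOp_Vv (hC : ∀ p q l, IsMFCreation (d p) p q l (Set.mem_univ _) (C p q l))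
    (i : Fin 2) (q : Fin r) (w : List (Fin 2)) :
    CrOp C (lab i) (VvM d q w) = VvM d q (i :: w) := by
  cases w with
  | nil =>
      rw [show VvM d q [] = vac q from rfl, CrOp_vac d C hC i q,
        show VvM d q [i] = ∑ g : Fin 1 → Fin r,
          (∏ j, (Real.sqrt (d (g j)) : ℂ)) • wvec (mwd q i (g 0) []) from rfl,
        sum_fun_one]
      refine Finset.sum_congr rfl fun a _ => ?_
      rw [Fin.prod_univ_one]
  | cons i₀ t =>
      rw [show VvM d q (i₀ :: t) = ∑ g : Fin (t.length + 1) → Fin r,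
          (∏ j, (Real.sqrt (d (g j)) : ℂ)) •
            wvec (mwd q i₀ (g 0) (t.zip (List.ofFn (fun k => g k.succ)))) from rfl,
        map_sum]
      simp only [map_smul, CrOp_mwd d C hC, Finset.smul_sum, smul_smul]
      have hR : VvM d q (i :: i₀ :: t) = ∑ a : Fin r, ∑ g : Fin (t.length + 1) → Fin r,
          ((Real.sqrt (d a) : ℂ) * ∏ j, (Real.sqrt (d (g j)) : ℂ)) •
            wvec (mwd q i a ((i₀, g 0) :: t.zip (List.ofFn fun k => g k.succ))) := by
        rw [show VvM d q (i :: i₀ :: t) = ∑ G : Fin (t.length + 1 + 1) → Fin r,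
            (∏ j, (Real.sqrt (d (G j)) : ℂ)) •
              wvec (mwd q i (G 0) ((i₀ :: t).zip (List.ofFn (fun k => G k.succ)))) from rfl,
          sum_succ_fun]
        refine Finset.sum_congr rfl fun a _ => Finset.sum_congr rfl fun g _ => ?_
        simp only [Fin.prod_univ_succ, Fin.cons_zero, Fin.cons_succ, List.ofFn_succ,
          List.zip_cons_cons]
      rw [hR, Finset.sum_comm]
      refine Finset.sum_congr rfl fun g _ => Finset.sum_congr rfl fun a _ => ?_
      rw [mul_comm]

lemma sum_prev (q : Fin r) (t : List (Fin 2)) :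
    ∑ f : Fin t.length → Fin r,
      (∏ j, (Real.sqrt (d (f j)) : ℂ)) • prevV q (t.zip (List.ofFn f)) = VvM d q t := by
  cases t with
  | nil =>
      rw [show VvM d q [] = vac q from rfl]
      show ∑ f : Fin 0 → Fin r, (∏ j, (Real.sqrt (d (f j)) : ℂ)) •
        prevV q (([] : List (Fin 2)).zip (List.ofFn f)) = vac q
      rw [Fintype.sum_subsingleton _ (fun j : Fin 0 => j.elim0)]
      simp [prevV]
  | cons i₁ t' =>
      show ∑ f : Fin (t'.length + 1) → Fin r, (∏ j, (Real.sqrt (d (f j)) : ℂ)) •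
        prevV q ((i₁ :: t').zip (List.ofFn f)) = VvM d q (i₁ :: t')
      rw [sum_succ_fun,
        show VvM d q (i₁ :: t') = ∑ g : Fin (t'.length + 1) → Fin r,
          (∏ j, (Real.sqrt (d (g j)) : ℂ)) •
            wvec (mwd q i₁ (g 0) (t'.zip (List.ofFn (fun k => g k.succ)))) from rfl,
        sum_succ_fun]
      refine Finset.sum_congr rfl fun p _ => Finset.sum_congr rfl fun f _ => ?_
      simp only [Fin.prod_univ_succ, Fin.cons_zero, Fin.cons_succ, List.ofFn_succ,
        List.zip_cons_cons, prevV]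

lemma AnOp_Vv (hC : ∀ p q l, IsMFCreation (d p) p q l (Set.mem_univ _) (C p q l))
    (hd : ∀ p, 0 ≤ d p) (hsum : ∑ p, d p = 1)
    (i : Fin 2) (q : Fin r) (w : List (Fin 2)) :
    AnOp C (lab i) (VvM d q w)
      = match w with
        | [] => 0
        | a :: t => if a = i then VvM d q t else 0 := by
  cases w with
  | nil => exact AnOp_vac d C hC (lab i) q
  | cons i₀ t =>
      rw [show VvM d q (i₀ :: t) = ∑ g : Fin (t.length + 1) → Fin r,
          (∏ j, (Real.sqrt (d (g j)) : ℂ)) •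
            wvec (mwd q i₀ (g 0) (t.zip (List.ofFn (fun k => g k.succ)))) from rfl,
        map_sum]
      simp only [map_smul, AnOp_mwd d C hC]
      by_cases hi : i = i₀
      · subst hi
        simp only [eq_self_iff_true, if_true, smul_smul]
        have hscal : ∀ X : ℂ, ∑ p : Fin r, ((Real.sqrt (d p) : ℂ) * X) * Real.sqrt (d p) = X := by
          intro X
          have h1 : ∀ p : Fin r, ((Real.sqrt (d p) : ℂ) * X) * Real.sqrt (d p)
              = ((d p : ℝ) : ℂ) * X := fun p => by
            rw [mul_right_comm, ← Complex.ofReal_mul, Real.mul_self_sqrt (hd p)]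
          simp_rw [h1]
          rw [← Finset.sum_mul, ← Complex.ofReal_sum, hsum, Complex.ofReal_one, one_mul]
        calc _ = ∑ f : Fin t.length → Fin r,
            (∏ j, (Real.sqrt (d (f j)) : ℂ)) • prevV q (t.zip (List.ofFn f)) := by
              rw [sum_succ_fun, Finset.sum_comm]
              refine Finset.sum_congr rfl fun f _ => ?_
              simp only [Fin.prod_univ_succ, Fin.cons_zero, Fin.cons_succ, smul_smul]
              rw [← Finset.sum_smul]
              congr 1
              exact hscal _
          _ = VvM d q t := sum_prev d q t
      · have h2 : ¬(i₀ = i) := fun h => hi h.symm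
        simp [hi, h2]

lemma inner_ite {H : Type*} [NormedAddCommGroup H] [InnerProductSpace ℂ H]
    (P : Prop) [Decidable P] (x y : H) :
    (inner ℂ x (if P then y else (0 : H)) : ℂ) = if P then inner ℂ x y else 0 := by
  split_ifs <;> simp

lemma inner_list_sum {H : Type*} [NormedAddCommGroup H] [InnerProductSpace ℂ H] (x : H) :
    ∀ L : List H, (inner ℂ x L.sum : ℂ) = (L.map (fun y => (inner ℂ x y : ℂ))).sum
  | [] => by simp
  | y :: L => by simp [inner_add_right, inner_list_sum x L]

def stepL (cr : Fin 2) : List (Fin 2) → List (List (Fin 2))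
  | [] => [[cr]]
  | a :: t => (cr :: a :: t) :: (if a = cr then [] else [t])

def crOf (ε : Bool) : Fin 2 := if ε then 0 else 1

def runL : List Bool → List (List (Fin 2))
  | [] => [[]]
  | ε :: rest => (runL rest).flatMap (stepL (crOf ε))

lemma sum_map_flatMap {α β M : Type*} [AddCommMonoid M] (g : α → List β) (h : β → M) :
    ∀ L : List α, ((L.flatMap g).map h).sum = (L.map (fun x => (((g x).map h).sum))).sum
  | [] => rfl
  | x :: L => by
      simp only [List.flatMap_cons, List.map_append, List.sum_append, List.map_cons,
        List.sum_cons, sum_map_flatMap g h L]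

lemma c_decomp :
    (∑ pq : Fin r × Fin r, (C pq.1 pq.2 (Sum.inl ()) +
        ContinuousLinearMap.adjoint (C pq.2 pq.1 (Sum.inr ()))))
      = CrOp C (lab 0) + AnOp C (lab 1) := by
  rw [Finset.sum_add_distrib]
  congr 1
  rw [AnOp]
  exact Fintype.sum_equiv (Equiv.prodComm (Fin r) (Fin r)) _ _ (fun pq => rfl)

lemma c_adj_decomp :
    adjoint (∑ pq : Fin r × Fin r, (C pq.1 pq.2 (Sum.inl ()) +
        ContinuousLinearMap.adjoint (C pq.2 pq.1 (Sum.inr ()))))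
      = CrOp C (lab 1) + AnOp C (lab 0) := by
  rw [c_decomp C, map_add, CrOp, AnOp, map_sum, map_sum]
  simp only [ContinuousLinearMap.adjoint_adjoint]
  rw [add_comm]
  rfl

lemma step_M (hC : ∀ p q l, IsMFCreation (d p) p q l (Set.mem_univ _) (C p q l))
    (hd : ∀ p, 0 ≤ d p) (hsum : ∑ p, d p = 1) (ε : Bool) (q : Fin r) (w : List (Fin 2)) :
    sOp ε (∑ pq : Fin r × Fin r, (C pq.1 pq.2 (Sum.inl ()) +
        ContinuousLinearMap.adjoint (C pq.2 pq.1 (Sum.inr ())))) (VvM d q w)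
      = ((stepL (crOf ε) w).map (VvM d q)).sum := by
  cases ε
  · rw [show sOp false (∑ pq : Fin r × Fin r, (C pq.1 pq.2 (Sum.inl ()) +
        ContinuousLinearMap.adjoint (C pq.2 pq.1 (Sum.inr ())))) = adjoint
        (∑ pq : Fin r × Fin r, (C pq.1 pq.2 (Sum.inl ()) +
        ContinuousLinearMap.adjoint (C pq.2 pq.1 (Sum.inr ())))) from rfl,
      c_adj_decomp C, ContinuousLinearMap.add_apply, CrOp_Vv d C hC 1 q w,
      AnOp_Vv d C hC hd hsum 0 q w]
    cases w with
    | nil => simp [stepL, crOf]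
    | cons a t => fin_cases a <;> simp [stepL, crOf]
  · rw [show sOp true (∑ pq : Fin r × Fin r, (C pq.1 pq.2 (Sum.inl ()) +
        ContinuousLinearMap.adjoint (C pq.2 pq.1 (Sum.inr ())))) =
        (∑ pq : Fin r × Fin r, (C pq.1 pq.2 (Sum.inl ()) +
        ContinuousLinearMap.adjoint (C pq.2 pq.1 (Sum.inr ())))) from rfl,
      c_decomp C, ContinuousLinearMap.add_apply, CrOp_Vv d C hC 0 q w,
      AnOp_Vv d C hC hd hsum 1 q w]
    cases w with
    | nil => simp [stepL, crOf]
    | cons a t => fin_cases a <;> simp [stepL, crOf]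

lemma run_M (hC : ∀ p q l, IsMFCreation (d p) p q l (Set.mem_univ _) (C p q l))
    (hd : ∀ p, 0 ≤ d p) (hsum : ∑ p, d p = 1) :
    ∀ (l : List Bool) (q : Fin r),
    ((l.map (fun ε => sOp ε (∑ pq : Fin r × Fin r, (C pq.1 pq.2 (Sum.inl ()) +
        ContinuousLinearMap.adjoint (C pq.2 pq.1 (Sum.inr ())))))).prod) (vac q)
      = ((runL l).map (VvM d q)).sum
  | [], q => by
      simp only [List.map_nil, List.prod_nil, ContinuousLinearMap.one_apply, runL,
        List.map_cons, List.map_nil, List.sum_cons, List.sum_nil, add_zero]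
      rfl
  | ε :: l, q => by
      rw [List.map_cons, List.prod_cons, ContinuousLinearMap.mul_apply,
        run_M hC hd hsum l q, map_list_sum, List.map_map, runL, sum_map_flatMap]
      refine congrArg List.sum (List.map_congr_left fun w _ => ?_)
      exact step_M d C hC hd hsum ε q w

lemma inner_vac_Vv (q : Fin r) (w : List (Fin 2)) :
    (inner ℂ (vac q : MSpace r Set.univ LL) (VvM d q w) : ℂ) = if w = [] then 1 else 0 := by
  cases w with
  | nil => simp [-inner_self_eq_norm_sq_to_K, inner_mvec, VvM]
  | cons i t =>
      rw [show VvM d q (i :: t) = ∑ g : Fin (t.length + 1) → Fin r,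
          (∏ j, (Real.sqrt (d (g j)) : ℂ)) •
            wvec (mwd q i (g 0) (t.zip (List.ofFn (fun k => g k.succ)))) from rfl]
      rw [inner_sum]
      simp [inner_smul_right, inner_mvec]

end Ops

/-! ### Fock side -/

section Fock

def FvF : List (Fin 2) → FSpace (Fin 2)
  | [] => fvac
  | a :: t => fword (a :: t) (List.cons_ne_nil a t)

variable (ell₀ : Fin 2 → (FSpace (Fin 2) →L[ℂ] FSpace (Fin 2)))

lemma ell_Fv (hell₀ : ∀ i, IsFreeCreation i (ell₀ i)) (i : Fin 2) (w : List (Fin 2)) :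
    ell₀ i (FvF w) = FvF (i :: w) := by
  cases w with
  | nil => exact (hell₀ i).1
  | cons a t => exact (hell₀ i).2 (a :: t) (List.cons_ne_nil a t)

lemma elladj_Fv (hell₀ : ∀ i, IsFreeCreation i (ell₀ i)) (i : Fin 2) (w : List (Fin 2)) :
    adjoint (ell₀ i) (FvF w)
      = match w with
        | [] => 0
        | a :: t => if a = i then FvF t else 0 := by
  refine fadj _ _ _ fun j => ?_
  cases j with
  | inl u =>
      rw [show (fvec (Sum.inl u) : FSpace (Fin 2)) = fvac from by cases u; rfl, (hell₀ i).1]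
      cases w with
      | nil => simp [FvF, inner_fvec]
      | cons a t =>
          cases t with
          | nil =>
              simp only [FvF, fvac_fvec, fword_fvec, inner_ite, inner_fvec, inner_zero_right,
                Sum.inr.injEq, Subtype.mk.injEq, List.cons.injEq, Sum.inl.injEq]
              by_cases h : a = i <;> simp_all [eq_comm]
          | cons b t' =>
              simp only [FvF, fvac_fvec, fword_fvec, inner_ite, inner_fvec, inner_zero_right,
                Sum.inr.injEq, Subtype.mk.injEq, List.cons.injEq]
              simp
  | inr ww =>
      obtain ⟨w', hw'⟩ := ww
      rw [show (fvec (Sum.inr ⟨w', hw'⟩) : FSpace (Fin 2)) = fword w' hw' from rfl,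
        (hell₀ i).2 w' hw']
      cases w with
      | nil => simp [FvF, fvac_fvec, fword_fvec, inner_fvec]
      | cons a t =>
          cases t with
          | nil =>
              simp only [FvF, fvac_fvec, fword_fvec, inner_ite, inner_fvec, inner_zero_right,
                Sum.inr.injEq, Subtype.mk.injEq, List.cons.injEq, Sum.inl.injEq]
              by_cases h : a = i <;> by_cases h2 : w' = [] <;> simp_all [eq_comm]
          | cons b t' =>
              simp only [FvF, fvac_fvec, fword_fvec, inner_ite, inner_fvec, inner_zero_right,
                Sum.inr.injEq, Subtype.mk.injEq, List.cons.injEq]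
              by_cases h : a = i <;> by_cases h2 : w' = b :: t' <;> simp_all [eq_comm]

lemma step_F (hell₀ : ∀ i, IsFreeCreation i (ell₀ i)) (ε : Bool) (w : List (Fin 2)) :
    sOp ε (ell₀ 0 + ContinuousLinearMap.adjoint (ell₀ 1)) (FvF w)
      = ((stepL (crOf ε) w).map FvF).sum := by
  cases ε
  · rw [show sOp false (ell₀ 0 + ContinuousLinearMap.adjoint (ell₀ 1))
        = adjoint (ell₀ 0 + ContinuousLinearMap.adjoint (ell₀ 1)) from rfl,
      map_add, ContinuousLinearMap.adjoint_adjoint, ContinuousLinearMap.add_apply,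
      elladj_Fv ell₀ hell₀ 0 w, ell_Fv ell₀ hell₀ 1 w]
    cases w with
    | nil => simp [stepL, crOf]
    | cons a t => fin_cases a <;> simp [stepL, crOf, add_comm]
  · rw [show sOp true (ell₀ 0 + ContinuousLinearMap.adjoint (ell₀ 1))
        = ell₀ 0 + ContinuousLinearMap.adjoint (ell₀ 1) from rfl,
      ContinuousLinearMap.add_apply, ell_Fv ell₀ hell₀ 0 w, elladj_Fv ell₀ hell₀ 1 w]
    cases w with
    | nil => simp [stepL, crOf]
    | cons a t => fin_cases a <;> simp [stepL, crOf, add_comm]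

lemma run_F (hell₀ : ∀ i, IsFreeCreation i (ell₀ i)) :
    ∀ (l : List Bool),
    ((l.map (fun ε => sOp ε (ell₀ 0 + ContinuousLinearMap.adjoint (ell₀ 1)))).prod) fvac
      = ((runL l).map FvF).sum
  | [] => by
      simp only [List.map_nil, List.prod_nil, ContinuousLinearMap.one_apply, runL,
        List.map_cons, List.map_nil, List.sum_cons, List.sum_nil, add_zero]
      rfl
  | ε :: l => by
      rw [List.map_cons, List.prod_cons, ContinuousLinearMap.mul_apply,
        show ((l.map (fun ε => sOp ε (ell₀ 0 + ContinuousLinearMap.adjoint (ell₀ 1)))).prod) fvac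
          = ((runL l).map FvF).sum from run_F hell₀ l,
        map_list_sum, List.map_map, runL, sum_map_flatMap]
      refine congrArg List.sum (List.map_congr_left fun w _ => ?_)
      exact step_F ell₀ hell₀ ε w

lemma inner_fvac_Fv (w : List (Fin 2)) :
    (inner ℂ (fvac : FSpace (Fin 2)) (FvF w) : ℂ) = if w = [] then 1 else 0 := by
  cases w with
  | nil => simp [-inner_self_eq_norm_sq_to_K, FvF, fvac_fvec, inner_fvec]
  | cons a t => simp [FvF, fvac_fvec, fword_fvec, inner_fvec]

end Fock



end AuxCirc
end AuxCircProof

set_option synthInstance.maxHeartbeats 400000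
set_option maxHeartbeats 1000000

/-- if `U = {u}` is a singleton and `b_{p,q}(u) = d_p` with `Σ_p d_p = 1`,
`d_p ≥ 0`, then `c = Σ_{p,q} ζ_{p,q}(u)` is a standard circular element with respect to
`Φ = Σ_q d_q·Ψ_q`: its *-moments agree with those of a standard circular operator
`c₀ = ℓ(i₁) + ℓ(i₂)*` in the vacuum state on the full Fock space over a two-element set. -/
theorem sumMatricialRCircular_is_standard_circular
    (r : ℕ) (hr : 1 ≤ r) (d : Fin r → ℝ) (hd : ∀ p, 0 ≤ d p) (hsum : ∑ p, d p = 1)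
    (C : (p q : Fin r) → (Unit ⊕ Unit) →
      (MSpace r Set.univ (Unit ⊕ Unit) →L[ℂ] MSpace r Set.univ (Unit ⊕ Unit)))
    (hC : ∀ p q l, IsMFCreation (d p) p q l (Set.mem_univ _) (C p q l))
    (ell₀ : Fin 2 → (FSpace (Fin 2) →L[ℂ] FSpace (Fin 2)))
    (hell₀ : ∀ i, IsFreeCreation i (ell₀ i)) :
    ∀ (m : ℕ), 1 ≤ m → ∀ (ε : Fin m → Bool),
      (∑ q : Fin r, (d q : ℂ) *
        PsiM q (List.ofFn (fun j => sOp (ε j)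
          (∑ pq : Fin r × Fin r,
            (C pq.1 pq.2 (Sum.inl ()) +
              ContinuousLinearMap.adjoint (C pq.2 pq.1 (Sum.inr ())))))).prod)
      = fockState (List.ofFn (fun j => sOp (ε j)
          (ell₀ 0 + ContinuousLinearMap.adjoint (ell₀ 1)))).prod := by
  intro m hm ε
  classical
  rw [show (List.ofFn fun j => sOp (ε j) (∑ pq : Fin r × Fin r,
        (C pq.1 pq.2 (Sum.inl ()) + ContinuousLinearMap.adjoint (C pq.2 pq.1 (Sum.inr ())))))
      = (List.ofFn ε).map (fun e => sOp e (∑ pq : Fin r × Fin r,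
        (C pq.1 pq.2 (Sum.inl ()) + ContinuousLinearMap.adjoint (C pq.2 pq.1 (Sum.inr ())))))
      from by rw [List.map_ofFn]; rfl]
  rw [show (List.ofFn fun j => sOp (ε j) (ell₀ 0 + ContinuousLinearMap.adjoint (ell₀ 1)))
      = (List.ofFn ε).map (fun e => sOp e (ell₀ 0 + ContinuousLinearMap.adjoint (ell₀ 1)))
      from by rw [List.map_ofFn]; rfl]
  have hR : fockState ((List.ofFn ε).map
        (fun e => sOp e (ell₀ 0 + ContinuousLinearMap.adjoint (ell₀ 1)))).prod
      = ((AuxCirc.runL (List.ofFn ε)).map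
          (fun w => if w = [] then (1:ℂ) else 0)).sum := by
    unfold fockState
    rw [AuxCirc.run_F ell₀ hell₀ (List.ofFn ε), AuxCirc.inner_list_sum, List.map_map]
    exact congrArg List.sum (List.map_congr_left fun w _ => AuxCirc.inner_fvac_Fv w)
  have hLq : ∀ q : Fin r, PsiM q ((List.ofFn ε).map
        (fun e => sOp e (∑ pq : Fin r × Fin r,
          (C pq.1 pq.2 (Sum.inl ()) + ContinuousLinearMap.adjoint (C pq.2 pq.1 (Sum.inr ())))))).prod
      = ((AuxCirc.runL (List.ofFn ε)).map
          (fun w => if w = [] then (1:ℂ) else 0)).sum := by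
    intro q
    unfold PsiM
    rw [AuxCirc.run_M d C hC hd hsum (List.ofFn ε) q, AuxCirc.inner_list_sum, List.map_map]
    exact congrArg List.sum (List.map_congr_left fun w _ => AuxCirc.inner_vac_Vv d q w)
  rw [hR]
  rw [show (∑ q : Fin r, (d q : ℂ) * PsiM q ((List.ofFn ε).map
        (fun e => sOp e (∑ pq : Fin r × Fin r,
          (C pq.1 pq.2 (Sum.inl ()) + ContinuousLinearMap.adjoint (C pq.2 pq.1 (Sum.inr ())))))).prod)
      = ∑ q : Fin r, (d q : ℂ) * ((AuxCirc.runL (List.ofFn ε)).map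
          (fun w => if w = [] then (1:ℂ) else 0)).sum
      from Finset.sum_congr rfl fun q _ => by rw [hLq q]]
  rw [← Finset.sum_mul, ← Complex.ofReal_sum, hsum, Complex.ofReal_one, one_mul]
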